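/- arXiv:0809.2300 — 2 statements merged into one kernel-verified Lean document; each statement's English description precedes it below -/
import Mathlib

section
/- Let Ω be a finite set, R_X : Ω × Ω → [0,∞) transition rates with R_X(x,x) = 0 and symmetric support, and Q a strictly positive probability measure on Ω. Let R_XX : (Ω×Ω) × (Ω×Ω) → [0,∞) be a Markov self-coupling of R_X, i.e. ∑_{y'} R_XX((x,y),(x',y')) = R_X(x,x') for all x, x', y, and ∑_{x'} R_XX((x,y),(x',y')) = R_X(y,y') for all x, y, y'. Define the acceptance probability a(y,y') = min(1, [Q(y')·R_X(y',y)] / [Q(y)·R_X(y,y')]) for y ≠ y' with R_X(y,y') > 0, and a(y,y) = 1. Define the joint rates R_XY((x,y),(x',y')) = R_XX((x,y),(x',y'))·a(y,y') for y' ≠ y, and R_XY((x,y),(x',y)) = R_XX((x,y),(x',y)) + ∑_{y'≠y} R_XX((x,y),(x',y'))·(1 − a(y,y')). Then: (i) ∑_{y'} R_XY((x,y),(x',y')) = R_X(x,x') for all x, x', y (the first marginal has rates R_X); and (ii) for y' ≠ y, ∑_{x'} R_XY((x,y),(x',y')) = R_X(y,y')·a(y,y'), which depends only on (y,y') and satisfies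 detailed balance with respect to Q (the second marginal is a Markov process whose stationary distribution is Q). -/
open Finset

/-- **Correctness of the coupling control variate algorithm.**
Let `RX` be transition rates on a finite set `Ω` (zero diagonal, symmetric support), `Q` a
strictly positive probability measure, and `RXX` a Markov self-coupling of `RX` (both
marginal rate sums over distinct states equal `RX`).  Metropolize the second component:
with acceptance probability `a y y' = min 1 (Q y' RX y' y / (Q y RX y y'))` for `y ≠ y'`
with `RX y y' > 0` (and `a y y = 1`), set
`RXY ((x,y),(x',y')) = RXX ((x,y),(x',y')) · a y y'` for `y' ≠ y` and
`RXY ((x,y),(x',y)) = RXX ((x,y),(x',y)) + ∑_{y'≠y} RXX ((x,y),(x',y')) (1 − a y y')`. Then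
(i) the first marginal of `RXY` has rates `RX`, and (ii) for `y' ≠ y` the second marginal
rate sum equals `RX y y' · a y y'` (independently of `x`), and these rates satisfy detailed
balance with respect to `Q`. -/
theorem coupling_control_variate_algorithm_correct
    {Ω : Type*} [Fintype Ω] [DecidableEq Ω]
    (RX : Ω → Ω → ℝ)
    (hRXnonneg : ∀ x x', 0 ≤ RX x x') (hRXdiag : ∀ x, RX x x = 0)
    (hRXsymm : ∀ x x', 0 < RX x x' ↔ 0 < RX x' x)
    (Q : Ω → ℝ) (hQpos : ∀ x, 0 < Q x) (hQsum : ∑ x, Q x = 1)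
    (RXX : Ω × Ω → Ω × Ω → ℝ)
    (hRXXnonneg : ∀ p p', 0 ≤ RXX p p')
    (hRXXfst : ∀ x y x', x' ≠ x → ∑ y', RXX (x, y) (x', y') = RX x x')
    (hRXXsnd : ∀ x y y', y' ≠ y → ∑ x', RXX (x, y) (x', y') = RX y y')
    (a : Ω → Ω → ℝ)
    (ha : ∀ y y', a y y' =
      if y = y' then 1
      else if 0 < RX y y' then min 1 ((Q y' * RX y' y) / (Q y * RX y y'))
      else 1)
    (RXY : Ω × Ω → Ω × Ω → ℝ)
    (hRXY : ∀ x y x' y', RXY (x, y) (x', y') =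
      if y' = y then
        RXX (x, y) (x', y)
          + ∑ z ∈ univ.erase y, RXX (x, y) (x', z) * (1 - a y z)
      else RXX (x, y) (x', y') * a y y') :
    (∀ x y x', x' ≠ x → ∑ y', RXY (x, y) (x', y') = RX x x') ∧
    (∀ x y y', y' ≠ y → ∑ x', RXY (x, y) (x', y') = RX y y' * a y y') ∧
    (∀ y y', Q y * (RX y y' * a y y') = Q y' * (RX y' y * a y' y)) := by
  refine ⟨?_, ?_, ?_⟩
  · intro x y x' hx
    have h1 : ∀ y', RXY (x, y) (x', y') = if y' = y then
        RXX (x, y) (x', y) + ∑ z ∈ univ.erase y, RXX (x, y) (x', z) * (1 - a y z)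
      else RXX (x, y) (x', y') * a y y' := fun y' => hRXY x y x' y'
    rw [← Finset.sum_erase_add _ _ (Finset.mem_univ y)]
    have h2 : ∑ y' ∈ univ.erase y, RXY (x, y) (x', y')
        = ∑ y' ∈ univ.erase y, RXX (x, y) (x', y') * a y y' := by
      apply Finset.sum_congr rfl
      intro z hz
      rw [h1 z, if_neg (Finset.mem_erase.mp hz).1]
    rw [h2, h1 y, if_pos rfl]
    have h3 : ∑ y' ∈ univ.erase y, RXX (x, y) (x', y') * a y y'
        + ∑ z ∈ univ.erase y, RXX (x, y) (x', z) * (1 - a y z)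
        = ∑ y' ∈ univ.erase y, RXX (x, y) (x', y') := by
      rw [← Finset.sum_add_distrib]
      apply Finset.sum_congr rfl
      intro z _
      ring
    have h4 := hRXXfst x y x' hx
    rw [← Finset.sum_erase_add _ _ (Finset.mem_univ y)] at h4
    linarith
  · intro x y y' hy
    have : ∑ x', RXY (x, y) (x', y') = ∑ x', RXX (x, y) (x', y') * a y y' := by
      apply Finset.sum_congr rfl
      intro z _
      rw [hRXY, if_neg hy]
    rw [this, ← Finset.sum_mul, hRXXsnd x y y' hy]
  · intro y y'
    rcases eq_or_ne y y' with rfl | hne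
    · ring
    rcases (hRXnonneg y y').eq_or_lt.imp Eq.symm id with h0 | hpos
    · have h0' : RX y' y = 0 := by
        by_contra h
        have := (hRXsymm y y').mpr ((hRXnonneg y' y).lt_of_ne (Ne.symm h))
        linarith
      rw [h0, h0']; ring
    · have hpos' : 0 < RX y' y := (hRXsymm y y').mp hpos
      rw [ha y y', ha y' y, if_neg hne, if_neg hne.symm, if_pos hpos, if_pos hpos']
      have hy : 0 < Q y * RX y y' := mul_pos (hQpos y) hpos
      have hy' : 0 < Q y' * RX y' y := mul_pos (hQpos y') hpos'
      rw [show Q y * (RX y y' * min 1 (Q y' * RX y' y / (Q y * RX y y')))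
            = (Q y * RX y y') * min 1 (Q y' * RX y' y / (Q y * RX y y')) by ring,
          show Q y' * (RX y' y * min 1 (Q y * RX y y' / (Q y' * RX y' y)))
            = (Q y' * RX y' y) * min 1 (Q y * RX y y' / (Q y' * RX y' y)) by ring,
          mul_min_of_nonneg _ _ hy.le, mul_min_of_nonneg _ _ hy'.le,
          mul_one, mul_one, mul_div_cancel₀ _ hy.ne', mul_div_cancel₀ _ hy'.ne',
          min_comm]
end

section
/- Let X and Y be independent exponential random variables with rate β > 0, and let U be uniformly distributed on [0,1], independent of (X,Y). Then the pair (U·(X+Y), (1−U)·(X+Y)) has the same joint distribution as (X,Y); in particular, U·(X+Y) and (1−U)·(X+Y) are independent exponential random variables with rate β. -/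
open MeasureTheory ProbabilityTheory Real Set
open scoped ENNReal

noncomputable section KMPaux

namespace KMPaux

/-- The redistribution map `(s, u) ↦ (u s, (1-u) s)`. -/
def Phi : ℝ × ℝ → ℝ × ℝ := fun p => (p.2 * p.1, (1 - p.2) * p.1)

lemma measurable_Phi : Measurable Phi :=
  (measurable_snd.mul measurable_fst).prodMk
    ((measurable_const.sub measurable_snd).mul measurable_fst)

/-- The derivative of `Phi`. -/
def fder (p : ℝ × ℝ) : ℝ × ℝ →L[ℝ] ℝ × ℝ :=
  LinearMap.toContinuousLinearMap (Matrix.toLin (Module.Basis.finTwoProd ℝ) (Module.Basis.finTwoProd ℝ)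
    !![p.2, p.1; 1 - p.2, -p.1])

lemma hasFDerivAt_Phi (p : ℝ × ℝ) : HasFDerivAt Phi (fder p) p := by
  rw [fder, Matrix.toLin_finTwoProd_toContinuousLinearMap]
  refine (HasFDerivAt.prodMk (𝕜 := ℝ)
    (hasFDerivAt_snd.mul hasFDerivAt_fst : HasFDerivAt (fun q : ℝ × ℝ => q.2 * q.1) _ p)
    (((hasFDerivAt_const (1 : ℝ) p).sub hasFDerivAt_snd).mul hasFDerivAt_fst :
      HasFDerivAt (fun q : ℝ × ℝ => (1 - q.2) * q.1) _ p)).congr_fderiv ?_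
  ext <;> simp

lemma fder_det (p : ℝ × ℝ) : (fder p).det = -p.1 := by
  simp only [fder, LinearMap.det_toContinuousLinearMap, LinearMap.det_toLin,
    Matrix.det_fin_two_of]
  ring

lemma injOn_Phi : InjOn Phi (Ioi 0 ×ˢ Ioo 0 1) := by
  rintro ⟨s, u⟩ ⟨hs, hu0, hu1⟩ ⟨s', u'⟩ ⟨hs', hu0', hu1'⟩ h
  simp only [Phi, Prod.mk.injEq] at h
  obtain ⟨h1, h2⟩ := h
  have hs'' : (0:ℝ) < s := hs
  have hss : s = s' := by nlinarith
  subst hss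
  have : u = u' := by nlinarith
  simp [this]

lemma image_Phi_A : Phi '' (Ioi 0 ×ˢ Ioo 0 1) = Ioi (0:ℝ) ×ˢ Ioi (0:ℝ) := by
  ext ⟨x, y⟩
  simp only [mem_image, mem_prod, mem_Ioi, mem_Ioo]
  constructor
  · rintro ⟨⟨s, u⟩, ⟨hs, hu0, hu1⟩, heq⟩
    simp only [Phi, Prod.mk.injEq] at heq
    obtain ⟨rfl, rfl⟩ := heq
    exact ⟨mul_pos hu0 hs, mul_pos (by linarith) hs⟩
  · rintro ⟨hx, hy⟩
    have hxy : (0:ℝ) < x + y := by linarith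
    refine ⟨(x + y, x / (x + y)), ⟨hxy, div_pos hx hxy, (div_lt_one hxy).2 (by linarith)⟩, ?_⟩
    simp only [Phi, Prod.mk.injEq]
    constructor
    · field_simp
    · field_simp
      ring

/-- Pushing a density through a map. -/
lemma map_withDensity_comp {α β : Type*} [MeasurableSpace α] [MeasurableSpace β]
    (m : Measure α) {Φ : α → β} {ρ : β → ℝ≥0∞} (hΦ : Measurable Φ) (hρ : Measurable ρ) :
    Measure.map Φ (m.withDensity (fun x => ρ (Φ x))) = (Measure.map Φ m).withDensity ρ := by
  ext s hs
  rw [Measure.map_apply hΦ hs, withDensity_apply _ (hΦ hs), withDensity_apply _ hs,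
    setLIntegral_map hs hρ hΦ]

/-- Product of densities. -/
lemma prod_withDensity {f g : ℝ → ℝ≥0∞} (hf : Measurable f) (hg : Measurable g)
    [SigmaFinite (volume.withDensity f)] [SigmaFinite (volume.withDensity g)] :
    (volume.withDensity f).prod (volume.withDensity g)
      = (volume : Measure (ℝ × ℝ)).withDensity fun q => f q.1 * g q.2 := by
  refine Measure.prod_eq fun s t hs ht => ?_
  have hind : ∀ q : ℝ × ℝ, (s ×ˢ t).indicator (fun q : ℝ × ℝ => f q.1 * g q.2) q
      = s.indicator f q.1 * t.indicator g q.2 := by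
    intro q
    by_cases h1 : q.1 ∈ s <;> by_cases h2 : q.2 ∈ t <;>
      simp [Set.indicator, Set.mem_prod, h1, h2]
  rw [withDensity_apply _ (hs.prod ht), ← lintegral_indicator (hs.prod ht)]
  simp_rw [hind]
  rw [Measure.volume_eq_prod, lintegral_prod_mul ((hf.indicator hs).aemeasurable)
    ((hg.indicator ht).aemeasurable), lintegral_indicator hs, lintegral_indicator ht,
    withDensity_apply _ hs, withDensity_apply _ ht]

lemma expMeasure_def (β : ℝ) : expMeasure β = volume.withDensity (exponentialPDF β) := rfl

lemma measurable_expPDF (β : ℝ) : Measurable (exponentialPDF β) :=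
  (measurable_exponentialPDFReal β).ennreal_ofReal

lemma exp_Iic {β : ℝ} (hβ : 0 < β) (r : ℝ) :
    expMeasure β (Iic r) = ENNReal.ofReal (if 0 ≤ r then 1 - exp (-(β * r)) else 0) := by
  rw [expMeasure_def, withDensity_apply _ measurableSet_Iic,
    lintegral_exponentialPDF_eq_antiDeriv hβ]

/-- The sum of two independent rate `β` exponentials is `Gamma(2, β)`. -/
lemma conv_exp {β : ℝ} (hβ : 0 < β) :
    Measure.map (fun p : ℝ × ℝ => p.1 + p.2) ((expMeasure β).prod (expMeasure β))
      = gammaMeasure 2 β := by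
  haveI hP : IsProbabilityMeasure (expMeasure β) := isProbabilityMeasure_expMeasure hβ
  haveI : IsProbabilityMeasure (gammaMeasure 2 β) := isProbabilityMeasure_gammaMeasure two_pos hβ
  have hadd : Measurable fun p : ℝ × ℝ => p.1 + p.2 := measurable_fst.add measurable_snd
  haveI : IsProbabilityMeasure (Measure.map (fun p : ℝ × ℝ => p.1 + p.2)
      ((expMeasure β).prod (expMeasure β))) := Measure.isProbabilityMeasure_map hadd.aemeasurable
  refine Measure.ext_of_Iic _ _ fun t => ?_
  rw [Measure.map_apply hadd measurableSet_Iic,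
    Measure.prod_apply (hadd measurableSet_Iic)]
  have hmk : ∀ x : ℝ, (Prod.mk x ⁻¹' ((fun p : ℝ × ℝ => p.1 + p.2) ⁻¹' Iic t)) = Iic (t - x) := by
    intro x; ext y
    simp only [mem_preimage, mem_Iic, le_sub_iff_add_le']
  simp_rw [hmk, exp_Iic hβ]
  have hg : Measurable fun x : ℝ =>
      ENNReal.ofReal (if 0 ≤ t - x then 1 - exp (-(β * (t - x))) else 0) := by
    refine Measurable.ennreal_ofReal (Measurable.ite ?_ (by fun_prop) measurable_const)
    exact measurableSet_le measurable_const (measurable_const.sub measurable_id)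
  rw [expMeasure_def, lintegral_withDensity_eq_lintegral_mul _ (measurable_expPDF β) hg]
  simp only [Pi.mul_apply]
  rw [gammaMeasure, withDensity_apply _ measurableSet_Iic]
  by_cases ht : 0 ≤ t
  · have hLint : (fun x => exponentialPDF β x *
        ENNReal.ofReal (if 0 ≤ t - x then 1 - exp (-(β * (t - x))) else 0))
        = (Icc 0 t).indicator
            (fun x => ENNReal.ofReal (β * exp (-(β * x)) - β * exp (-(β * t)))) := by
      funext x
      rcases lt_or_ge x 0 with h | h
      · rw [exponentialPDF_of_neg h, zero_mul,
          indicator_of_notMem (fun hc => absurd hc.1 (not_le.2 h))]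
      · rcases le_or_gt x t with h2 | h2
        · rw [exponentialPDF_of_nonneg h, if_pos (by linarith),
            indicator_of_mem (mem_Icc.mpr ⟨h, h2⟩), ← ENNReal.ofReal_mul (by positivity)]
          congr 1
          have hexp : exp (-(β * x)) * exp (-(β * (t - x))) = exp (-(β * t)) := by
            rw [← Real.exp_add]; ring_nf
          rw [mul_sub, mul_one, mul_assoc, hexp]
        · rw [if_neg (by linarith), ENNReal.ofReal_zero, mul_zero,
            indicator_of_notMem (fun hc => absurd hc.2 (not_le.2 h2))]
    rw [hLint, lintegral_indicator measurableSet_Icc]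
    have hint : IntegrableOn (fun x => β * exp (-(β * x)) - β * exp (-(β * t)))
        (Icc 0 t) volume := (Continuous.integrableOn_Icc (by fun_prop))
    have hnn : 0 ≤ᵐ[volume.restrict (Icc 0 t)]
        fun x => β * exp (-(β * x)) - β * exp (-(β * t)) := by
      refine (ae_restrict_iff' measurableSet_Icc).2 (ae_of_all _ fun x hx => ?_)
      have h1 : exp (-(β * t)) ≤ exp (-(β * x)) :=
        exp_le_exp.2 (by nlinarith [hx.1, hx.2])
      simp only [Pi.zero_apply]
      nlinarith [h1, hβ]
    rw [← ofReal_integral_eq_lintegral_ofReal hint hnn]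
    have hInt1 : IntervalIntegrable (fun x => β * exp (-(β * x))) volume 0 t :=
      (by fun_prop : Continuous fun x : ℝ => β * exp (-(β * x))).intervalIntegrable _ _
    have hInt2 : IntervalIntegrable (fun _ : ℝ => β * exp (-(β * t))) volume 0 t :=
      intervalIntegrable_const
    have hval : ∫ x in Icc 0 t, (β * exp (-(β * x)) - β * exp (-(β * t)))
        = (1 - exp (-(β * t))) - β * t * exp (-(β * t)) := by
      rw [integral_Icc_eq_integral_Ioc, ← intervalIntegral.integral_of_le ht,
        intervalIntegral.integral_sub hInt1 hInt2, intervalIntegral.integral_const,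
        intervalIntegral.integral_eq_sub_of_hasDerivAt
          (f := fun a => -exp (-(β * a))) (fun x _ => hasDerivAt_neg_exp_mul_exp) hInt1]
      simp only [mul_zero, neg_zero, Real.exp_zero, smul_eq_mul, sub_zero]
      ring
    rw [hval]
    rw [lintegral_Iic_eq_lintegral_Iio_add_Icc _ ht, lintegral_gammaPDF_of_nonpos le_rfl,
      zero_add]
    have hg2 : ∀ᵐ x ∂(volume : Measure ℝ), x ∈ Icc (0:ℝ) t →
        gammaPDF 2 β x = ENNReal.ofReal (β ^ 2 * x * exp (-(β * x))) := by
      refine ae_of_all _ fun x hx => ?_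
      rw [gammaPDF_of_nonneg hx.1]
      congr 1
      rw [Real.Gamma_two, show (2:ℝ) - 1 = 1 by norm_num, Real.rpow_one,
        show (2:ℝ) = ((2:ℕ):ℝ) by norm_num, Real.rpow_natCast]
      ring
    rw [setLIntegral_congr_fun_ae measurableSet_Icc hg2]
    have hint2 : IntegrableOn (fun x => β ^ 2 * x * exp (-(β * x))) (Icc 0 t) volume :=
      (Continuous.integrableOn_Icc (by fun_prop))
    have hnn2 : 0 ≤ᵐ[volume.restrict (Icc 0 t)] fun x => β ^ 2 * x * exp (-(β * x)) := by
      refine (ae_restrict_iff' measurableSet_Icc).2 (ae_of_all _ fun x hx => ?_)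
      have := hx.1
      simp only [Pi.zero_apply]
      positivity
    rw [← ofReal_integral_eq_lintegral_ofReal hint2 hnn2]
    have hder : ∀ x ∈ uIcc (0:ℝ) t, HasDerivAt (fun y => -(β * y + 1) * exp (-(β * y)))
        (β ^ 2 * x * exp (-(β * x))) x := by
      intro x _
      have h1 : HasDerivAt (fun y : ℝ => -(β * y + 1)) (-β) x := by
        exact ((((hasDerivAt_id' x).const_mul β).add_const 1).neg).congr_deriv (by ring)
      have h2 : HasDerivAt (fun y : ℝ => exp (-(β * y))) (-(β * exp (-(β * x)))) x := by
        exact (((hasDerivAt_id' x).const_mul β).neg.exp).congr_deriv (by simp only [Pi.neg_apply]; ring)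
      exact (h1.mul h2).congr_deriv (by ring)
    have hint3 : IntervalIntegrable (fun x => β ^ 2 * x * exp (-(β * x))) volume 0 t :=
      (by fun_prop : Continuous fun x : ℝ => β ^ 2 * x * exp (-(β * x))).intervalIntegrable _ _
    have hval2 : ∫ x in Icc 0 t, β ^ 2 * x * exp (-(β * x))
        = (1 - exp (-(β * t))) - β * t * exp (-(β * t)) := by
      rw [integral_Icc_eq_integral_Ioc, ← intervalIntegral.integral_of_le ht,
        intervalIntegral.integral_eq_sub_of_hasDerivAt (fun x hx => hder x hx) hint3]
      simp only [mul_zero, neg_zero, Real.exp_zero, zero_add]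
      ring
    rw [hval2]
  · have hzero : (fun x => exponentialPDF β x *
        ENNReal.ofReal (if 0 ≤ t - x then 1 - exp (-(β * (t - x))) else 0))
        = fun _ => (0 : ℝ≥0∞) := by
      funext x
      rcases lt_or_ge x 0 with h | h
      · rw [exponentialPDF_of_neg h, zero_mul]
      · rw [if_neg (by push_neg at ht; linarith), ENNReal.ofReal_zero, mul_zero]
    rw [hzero, lintegral_zero]
    rw [setLIntegral_congr_fun_ae (g := fun _ => 0) measurableSet_Iic
      (ae_of_all _ fun x hx => gammaPDF_of_neg (lt_of_le_of_lt hx (not_le.1 ht))), lintegral_zero]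

/-- The change of variables: pushing `Gamma(2,β) ⊗ Unif[0,1]` through `Phi` gives two
independent exponentials. -/
lemma key {β : ℝ} (hβ : 0 < β) :
    Measure.map Phi ((gammaMeasure 2 β).prod (volume.restrict (Icc 0 1)))
      = (expMeasure β).prod (expMeasure β) := by
  haveI hexp : IsProbabilityMeasure (volume.withDensity (exponentialPDF β)) :=
    isProbabilityMeasure_expMeasure hβ
  haveI : IsProbabilityMeasure (volume.withDensity (gammaPDF 2 β)) :=
    isProbabilityMeasure_gammaMeasure two_pos hβ
  haveI : IsProbabilityMeasure (volume.withDensity ((Icc (0:ℝ) 1).indicator 1)) := by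
    rw [withDensity_indicator_one measurableSet_Icc]
    exact ⟨by simp⟩
  set ρ : ℝ × ℝ → ℝ≥0∞ := fun q => exponentialPDF β q.1 * exponentialPDF β q.2 with hρdef
  have hρ : Measurable ρ :=
    ((measurable_expPDF β).comp measurable_fst).mul ((measurable_expPDF β).comp measurable_snd)
  have habs : Measurable fun q : ℝ × ℝ => ENNReal.ofReal |q.1| :=
    measurable_fst.abs.ennreal_ofReal
  have hA : MeasurableSet (Ioi (0:ℝ) ×ˢ Ioo (0:ℝ) 1) := measurableSet_Ioi.prod measurableSet_Ioo
  -- step 1 : write the product measure as a density against planar Lebesgue measure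
  have step1 : (gammaMeasure 2 β).prod (volume.restrict (Icc 0 1))
      = (volume : Measure (ℝ × ℝ)).withDensity
          (fun q => gammaPDF 2 β q.1 * (Icc (0:ℝ) 1).indicator 1 q.2) := by
    rw [gammaMeasure, ← withDensity_indicator_one measurableSet_Icc,
      prod_withDensity (show Measurable (gammaPDF 2 β) from
          (measurable_gammaPDFReal 2 β).ennreal_ofReal)
        (measurable_one.indicator measurableSet_Icc)]
  -- a.e. identification of the density with the change-of-variables density
  have hN : (volume : Measure (ℝ × ℝ)) {q : ℝ × ℝ | q.2 = 0 ∨ q.2 = 1} = 0 := by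
    have hsub : {q : ℝ × ℝ | q.2 = 0 ∨ q.2 = 1} = univ ×ˢ ({0, 1} : Set ℝ) := by
      ext q; simp [Set.mem_prod]
    rw [hsub, Measure.volume_eq_prod, Measure.prod_prod]
    have h01 : (volume : Measure ℝ) {0, 1} = 0 := by
      refine measure_union_null ?_ ?_ <;> exact measure_singleton _
    rw [h01, mul_zero]
  have hae1 : (fun q : ℝ × ℝ => gammaPDF 2 β q.1 * (Icc (0:ℝ) 1).indicator 1 q.2)
      =ᵐ[(volume : Measure (ℝ × ℝ))]
        (Ioi (0:ℝ) ×ˢ Ioo (0:ℝ) 1).indicator (fun q => ENNReal.ofReal |q.1| * ρ (Phi q)) := by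
    refine (ae_iff.mpr (measure_mono_null ?_ hN))
    intro q hq
    simp only [mem_setOf_eq] at hq ⊢
    by_contra h2
    push_neg at h2
    obtain ⟨h0, h1⟩ := h2
    refine hq ?_
    by_cases hAq : q ∈ Ioi (0:ℝ) ×ˢ Ioo (0:ℝ) 1
    · have hs' : (0:ℝ) < q.1 := hAq.1
      have hu' : (0:ℝ) < q.2 ∧ q.2 < 1 := hAq.2
      rw [indicator_of_mem hAq, indicator_of_mem (mem_Icc.mpr ⟨hu'.1.le, hu'.2.le⟩),
        Pi.one_apply, mul_one]
      rw [gammaPDF_of_nonneg hs'.le, hρdef]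
      simp only [Phi]
      rw [exponentialPDF_of_nonneg (mul_nonneg hu'.1.le hs'.le),
        exponentialPDF_of_nonneg (mul_nonneg (by linarith [hu'.2]) hs'.le),
        ← ENNReal.ofReal_mul (by positivity), ← ENNReal.ofReal_mul (abs_nonneg _)]
      congr 1
      have hexp : exp (-(β * (q.2 * q.1))) * exp (-(β * ((1 - q.2) * q.1)))
          = exp (-(β * q.1)) := by
        rw [← Real.exp_add]; ring_nf
      rw [Real.Gamma_two, show (2:ℝ) - 1 = 1 by norm_num, Real.rpow_one,
        show (2:ℝ) = ((2:ℕ):ℝ) by norm_num, Real.rpow_natCast, abs_of_pos hs',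
        show β * exp (-(β * (q.2 * q.1))) * (β * exp (-(β * ((1 - q.2) * q.1))))
          = β ^ 2 * (exp (-(β * (q.2 * q.1))) * exp (-(β * ((1 - q.2) * q.1)))) by ring, hexp]
      ring
    · rw [indicator_of_notMem hAq]
      by_cases hu : q.2 ∈ Icc (0:ℝ) 1
      · have hu' : (0:ℝ) < q.2 ∧ q.2 < 1 :=
          ⟨lt_of_le_of_ne hu.1 (Ne.symm h0), lt_of_le_of_ne hu.2 h1⟩
      -- hence q.1 ≤ 0
        have hq1 : q.1 ≤ 0 := by
          by_contra hq1
          exact hAq ⟨not_le.1 hq1, hu'.1, hu'.2⟩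
        have : gammaPDF 2 β q.1 = 0 := by
          rcases lt_or_eq_of_le hq1 with h | h
          · exact gammaPDF_of_neg h
          · rw [h, gammaPDF_of_nonneg le_rfl, show (2:ℝ) - 1 = 1 by norm_num, Real.rpow_one]
            simp
        rw [this, zero_mul]
      · rw [indicator_of_notMem hu, mul_zero]
  have hM : (volume : Measure (ℝ × ℝ)) {q : ℝ × ℝ | q.1 = 0 ∨ q.2 = 0} = 0 := by
    have hsub : {q : ℝ × ℝ | q.1 = 0 ∨ q.2 = 0}
        ⊆ (({0} : Set ℝ) ×ˢ univ) ∪ (univ ×ˢ ({0} : Set ℝ)) := by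
      intro q hq
      rcases hq with h | h
      · exact Or.inl ⟨h, mem_univ _⟩
      · exact Or.inr ⟨mem_univ _, h⟩
    refine measure_mono_null hsub (measure_union_null ?_ ?_) <;>
      rw [Measure.volume_eq_prod, Measure.prod_prod] <;> simp
  have hae2 : (Ioi (0:ℝ) ×ˢ Ioi (0:ℝ)).indicator ρ =ᵐ[(volume : Measure (ℝ × ℝ))] ρ := by
    refine (ae_iff.mpr (measure_mono_null ?_ hM))
    intro q hq
    simp only [mem_setOf_eq] at hq ⊢
    by_contra h2
    push_neg at h2
    obtain ⟨h0, h1⟩ := h2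
    refine hq ?_
    by_cases hAq : q ∈ Ioi (0:ℝ) ×ˢ Ioi (0:ℝ)
    · rw [indicator_of_mem hAq]
    · rw [indicator_of_notMem hAq]
      have : q.1 < 0 ∨ q.2 < 0 := by
        by_contra hc
        push_neg at hc
        exact hAq ⟨lt_of_le_of_ne hc.1 (Ne.symm h0), lt_of_le_of_ne hc.2 (Ne.symm h1)⟩
      rcases this with h | h
      · rw [hρdef]; simp only; rw [exponentialPDF_of_neg h, zero_mul]
      · rw [hρdef]; simp only; rw [exponentialPDF_of_neg h, mul_zero]
  -- the chain of equalities
  rw [step1, withDensity_congr_ae hae1, withDensity_indicator hA,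
    show (fun q : ℝ × ℝ => ENNReal.ofReal |q.1| * ρ (Phi q))
      = (fun q : ℝ × ℝ => ENNReal.ofReal |q.1|) * (fun q => ρ (Phi q)) from rfl,
    withDensity_mul _ habs (show Measurable fun q => ρ (Phi q) from hρ.comp measurable_Phi),
    map_withDensity_comp _ measurable_Phi hρ]
  have hjac : Measure.map Phi
      (((volume : Measure (ℝ × ℝ)).restrict (Ioi 0 ×ˢ Ioo 0 1)).withDensity
        fun q => ENNReal.ofReal |q.1|)
      = (volume : Measure (ℝ × ℝ)).restrict (Ioi 0 ×ˢ Ioi 0) := by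
    have h := map_withDensity_abs_det_fderiv_eq_addHaar volume hA.nullMeasurableSet
      (fun q _ => (hasFDerivAt_Phi q).hasFDerivWithinAt) injOn_Phi
    rw [image_Phi_A] at h
    rw [show (fun q : ℝ × ℝ => ENNReal.ofReal |q.1|)
        = fun q : ℝ × ℝ => ENNReal.ofReal |(fder q).det| from
      funext fun q => by rw [fder_det, abs_neg]]
    exact h
  rw [hjac, ← withDensity_indicator (measurableSet_Ioi.prod measurableSet_Ioi),
    withDensity_congr_ae hae2, hρdef, ← prod_withDensity (measurable_expPDF β)
      (measurable_expPDF β), ← expMeasure_def]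

end KMPaux

end KMPaux

/-- **Invariance property underlying the KMP redistribution step.**
Let `X, Y` be independent exponential random variables of rate `β > 0` and `U` uniform on
`[0,1]`, independent of `(X,Y)`.  Then `(U (X+Y), (1−U)(X+Y))` has the same joint law as
`(X, Y)`; in particular its components are independent rate-`β` exponentials. -/
theorem kmp_redistribution_invariance
    {Ω : Type*} [MeasurableSpace Ω] (μ : Measure Ω) [IsProbabilityMeasure μ]
    (X Y U : Ω → ℝ) (hX : Measurable X) (hY : Measurable Y) (hU : Measurable U)
    (β : ℝ) (hβ : 0 < β)
    (hXlaw : Measure.map X μ = expMeasure β)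
    (hYlaw : Measure.map Y μ = expMeasure β)
    (hUlaw : Measure.map U μ = volume.restrict (Set.Icc (0 : ℝ) 1))
    (hXYindep : IndepFun X Y μ)
    (hUindep : IndepFun (fun ω => (X ω, Y ω)) U μ) :
    Measure.map (fun ω => (U ω * (X ω + Y ω), (1 - U ω) * (X ω + Y ω))) μ
      = Measure.map (fun ω => (X ω, Y ω)) μ ∧
    Measure.map (fun ω => U ω * (X ω + Y ω)) μ = expMeasure β ∧
    Measure.map (fun ω => (1 - U ω) * (X ω + Y ω)) μ = expMeasure β ∧
    IndepFun (fun ω => U ω * (X ω + Y ω)) (fun ω => (1 - U ω) * (X ω + Y ω)) μ := by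
  haveI hPexp : IsProbabilityMeasure (expMeasure β) := isProbabilityMeasure_expMeasure hβ
  haveI : IsProbabilityMeasure (gammaMeasure 2 β) := isProbabilityMeasure_gammaMeasure two_pos hβ
  haveI hPunif : IsProbabilityMeasure (volume.restrict (Set.Icc (0:ℝ) 1)) :=
    ⟨by simp [Real.volume_Icc]⟩
  have hXY : Measure.map (fun ω => (X ω, Y ω)) μ = (expMeasure β).prod (expMeasure β) := by
    rw [(indepFun_iff_map_prod_eq_prod_map_map hX.aemeasurable hY.aemeasurable).mp hXYindep,
      hXlaw, hYlaw]
  have hT : Measure.map (fun ω => ((X ω, Y ω), U ω)) μ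
      = ((expMeasure β).prod (expMeasure β)).prod (volume.restrict (Set.Icc 0 1)) := by
    rw [(indepFun_iff_map_prod_eq_prod_map_map (hX.prodMk hY).aemeasurable
      hU.aemeasurable).mp hUindep, hXY, hUlaw]
  have hadd : Measurable fun p : ℝ × ℝ => p.1 + p.2 := measurable_fst.add measurable_snd
  have hPm : Measurable (Prod.map (fun p : ℝ × ℝ => p.1 + p.2) (id : ℝ → ℝ)) :=
    hadd.prodMap measurable_id
  have htm : Measurable fun ω => ((X ω, Y ω), U ω) := (hX.prodMk hY).prodMk hU
  have hmain : Measure.map (fun ω => (U ω * (X ω + Y ω), (1 - U ω) * (X ω + Y ω))) μ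
      = (expMeasure β).prod (expMeasure β) := by
    have hcomp : (fun ω => (U ω * (X ω + Y ω), (1 - U ω) * (X ω + Y ω)))
        = (KMPaux.Phi ∘ Prod.map (fun p : ℝ × ℝ => p.1 + p.2) id)
            ∘ fun ω => ((X ω, Y ω), U ω) := rfl
    rw [hcomp, ← Measure.map_map (KMPaux.measurable_Phi.comp hPm) htm,
      ← Measure.map_map KMPaux.measurable_Phi hPm, hT,
      ← Measure.map_prod_map _ _ hadd measurable_id, Measure.map_id,
      KMPaux.conv_exp hβ, KMPaux.key hβ]
  have hm1 : Measurable fun ω => U ω * (X ω + Y ω) := hU.mul (hX.add hY)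
  have hm2 : Measurable fun ω => (1 - U ω) * (X ω + Y ω) :=
    (measurable_const.sub hU).mul (hX.add hY)
  have h1 : Measure.map (fun ω => U ω * (X ω + Y ω)) μ = expMeasure β := by
    have hc : (fun ω => U ω * (X ω + Y ω))
        = Prod.fst ∘ fun ω => (U ω * (X ω + Y ω), (1 - U ω) * (X ω + Y ω)) := rfl
    rw [hc, ← Measure.map_map measurable_fst (hm1.prodMk hm2), hmain,
      Measure.map_fst_prod, measure_univ, one_smul]
  have h2 : Measure.map (fun ω => (1 - U ω) * (X ω + Y ω)) μ = expMeasure β := by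
    have hc : (fun ω => (1 - U ω) * (X ω + Y ω))
        = Prod.snd ∘ fun ω => (U ω * (X ω + Y ω), (1 - U ω) * (X ω + Y ω)) := rfl
    rw [hc, ← Measure.map_map measurable_snd (hm1.prodMk hm2), hmain,
      Measure.map_snd_prod, measure_univ, one_smul]
  exact ⟨hmain.trans hXY.symm, h1, h2,
    (indepFun_iff_map_prod_eq_prod_map_map hm1.aemeasurable hm2.aemeasurable).mpr
      (by rw [hmain, h1, h2])⟩
end
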